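/- Suppose M satisfies the conditions of one of the Cases 1–4 (Case 1: every [[a,b],[0,d]] ∈ M has a ≥ d, every [[a,0],[c,d]] ∈ M has a ≤ d, whenever [[a,b],[c,0]] ∈ M and [[0,b'],[c',d']] ∈ M one has bc' ≥ b'c, and no matrix in M has the form [[a,0],[0,d]] or [[0,b],[c,0]]; Case 2: every [[a,b],[0,d]] ∈ M has a < d, every [[a,0],[c,d]] ∈ M has a > d, and whenever [[a,b],[c,0]] ∈ M and [[0,b'],[c',d']] ∈ M one has bc' < b'c; Case 3: every [[a,b],[0,d]] ∈ M has a ≥ d, every [[a,0],[c,d]] ∈ M has a > d, and no matrix in M has top-left entry 0; Case 4: every [[a,b],[0,d]] ∈ M has a < d, every [[a,0],[c,d]] ∈ M has a ≤ d, and no matrix in M has bottom-right entry 0). Then for any two vectors V = (v₁,v₂) and W = (w₁,w₂) with positive entries and any ω ∈ S^ℕ, limₙ N(Pₙ(ω)V) = limₙ N(Pₙ(ω)W); that is, the uniform limit of ω ↦ N(Pₙ(ω)V) does not depend on the positive vector V. -/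

import Mathlib

open Matrix Filter

/-- A 2×2 real matrix is nonnegative and column-allowable. -/
def ColAllowable (A : Matrix (Fin 2) (Fin 2) ℝ) : Prop :=
  (∀ i j, 0 ≤ A i j) ∧ 0 < A 0 0 + A 1 0 ∧ 0 < A 0 1 + A 1 1

/-- `n(X) = x₁/(x₁+x₂)`. -/
noncomputable def nv (X : Fin 2 → ℝ) : ℝ := X 0 / (X 0 + X 1)

/-- The normalized vector `N(X)`. -/
noncomputable def Nv (X : Fin 2 → ℝ) : Fin 2 → ℝ := ![nv X, 1 - nv X]

/-- `Pₙ(ω) = M_{ω₁} M_{ω₂} ⋯ M_{ωₙ}`. -/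
def Pprod {s : ℕ} (M : Fin s → Matrix (Fin 2) (Fin 2) ℝ) (ω : ℕ → Fin s) (n : ℕ) :
    Matrix (Fin 2) (Fin 2) ℝ :=
  ((List.range n).map (fun i => M (ω i))).prod

lemma Pprod_zero {s : ℕ} (M : Fin s → Matrix (Fin 2) (Fin 2) ℝ) (ω : ℕ → Fin s) :
    Pprod M ω 0 = 1 := by simp [Pprod]

lemma Pprod_succ {s : ℕ} (M : Fin s → Matrix (Fin 2) (Fin 2) ℝ) (ω : ℕ → Fin s) (n : ℕ) :
    Pprod M ω (n + 1) = Pprod M ω n * M (ω n) := by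
  simp [Pprod, List.range_succ]

lemma colAllowable_one : ColAllowable (1 : Matrix (Fin 2) (Fin 2) ℝ) := by
  refine ⟨fun i j => ?_, ?_, ?_⟩ <;> simp [Matrix.one_apply]
  split <;> norm_num

lemma mul_apply2 (P A : Matrix (Fin 2) (Fin 2) ℝ) (i j : Fin 2) :
    (P * A) i j = P i 0 * A 0 j + P i 1 * A 1 j := by
  rw [Matrix.mul_apply, Fin.sum_univ_two]

lemma colAllowable_mul {P A : Matrix (Fin 2) (Fin 2) ℝ}
    (hP : ColAllowable P) (hA : ColAllowable A) : ColAllowable (P * A) := by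
  obtain ⟨hP0, hP1, hP2⟩ := hP
  obtain ⟨hA0, hA1, hA2⟩ := hA
  have key : ∀ j : Fin 2, 0 < A 0 j + A 1 j →
      0 < (P * A) 0 j + (P * A) 1 j := by
    intro j hj
    rw [mul_apply2, mul_apply2]
    rcases lt_or_ge 0 (A 0 j) with h | h
    · nlinarith [hP0 0 1, hP0 1 1, hA0 1 j, mul_pos hP1 h,
        mul_nonneg (add_nonneg (hP0 0 1) (hP0 1 1)) (hA0 1 j)]
    · have h0 : A 0 j = 0 := le_antisymm h (hA0 0 j)
      have h1 : 0 < A 1 j := by rw [h0] at hj; linarith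
      nlinarith [mul_pos hP2 h1, mul_nonneg (add_nonneg (hP0 0 0) (hP0 1 0)) (hA0 0 j)]
  refine ⟨fun i j => ?_, key 0 hA1, key 1 hA2⟩
  rw [mul_apply2]
  exact add_nonneg (mul_nonneg (hP0 i 0) (hA0 0 j)) (mul_nonneg (hP0 i 1) (hA0 1 j))

lemma mulVec_apply2 (P : Matrix (Fin 2) (Fin 2) ℝ) (V : Fin 2 → ℝ) (i : Fin 2) :
    P.mulVec V i = P i 0 * V 0 + P i 1 * V 1 := by
  simp [Matrix.mulVec, dotProduct, Fin.sum_univ_two]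

lemma nv_sub_nv (P : Matrix (Fin 2) (Fin 2) ℝ) (V W : Fin 2 → ℝ)
    (hv : 0 < (P 0 0 + P 1 0) * V 0 + (P 0 1 + P 1 1) * V 1)
    (hw : 0 < (P 0 0 + P 1 0) * W 0 + (P 0 1 + P 1 1) * W 1) :
    nv (P.mulVec V) - nv (P.mulVec W) =
      P.det * (V 0 * W 1 - V 1 * W 0) /
        (((P 0 0 + P 1 0) * V 0 + (P 0 1 + P 1 1) * V 1) *
         ((P 0 0 + P 1 0) * W 0 + (P 0 1 + P 1 1) * W 1)) := by
  have hv' : P 0 0 * V 0 + P 0 1 * V 1 + (P 1 0 * V 0 + P 1 1 * V 1) ≠ 0 := by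
    intro h; apply ne_of_gt hv; linarith
  have hw' : P 0 0 * W 0 + P 0 1 * W 1 + (P 1 0 * W 0 + P 1 1 * W 1) ≠ 0 := by
    intro h; apply ne_of_gt hw; linarith
  rw [nv, nv, mulVec_apply2, mulVec_apply2, mulVec_apply2, mulVec_apply2,
    Matrix.det_fin_two]
  rw [div_sub_div _ _ hv' hw', div_eq_div_iff (mul_ne_zero hv' hw') (ne_of_gt (mul_pos hv hw))]
  ring

lemma escape {f : ℕ → ℝ} {N : ℕ} {θ : ℝ} (hθ : 0 < θ) (S : ℕ → Prop)
    (hmono : ∀ n, N ≤ n → f n ≤ f (n + 1))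
    (hstep : ∀ n, N ≤ n → S n → θ * f n ≤ f (n + 1))
    (hS : ∀ m, ∃ n, m ≤ n ∧ S n)
    (hf : ∀ n, N ≤ n → 0 < f n) :
    ∀ j : ℕ, ∃ n, N ≤ n ∧ θ ^ j * f N ≤ f n := by
  have mono : ∀ m n, N ≤ m → m ≤ n → f m ≤ f n := by
    intro m n hm hmn
    induction n, hmn using Nat.le_induction with
    | base => exact le_refl _
    | succ n hn ih => exact le_trans ih (hmono n (le_trans hm hn))
  intro j
  induction j with
  | zero => exact ⟨N, le_refl N, by simp⟩
  | succ j ih =>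
    obtain ⟨n, hn, hfn⟩ := ih
    obtain ⟨n', hn', hSn'⟩ := hS n
    have hNn' : N ≤ n' := le_trans hn hn'
    refine ⟨n' + 1, by omega, ?_⟩
    have h1 : f n ≤ f n' := mono n n' hn hn'
    have h2 : θ * f n' ≤ f (n' + 1) := hstep n' hNn' hSn'
    have hθj : 0 < θ ^ j := pow_pos hθ j
    calc θ ^ (j + 1) * f N = θ * (θ ^ j * f N) := by ring
    _ ≤ θ * f n := by nlinarith
    _ ≤ θ * f n' := by nlinarith
    _ ≤ f (n' + 1) := h2

lemma pigeonhole {s : ℕ} (ω : ℕ → Fin s) (T : ℕ → Prop)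
    (hT : ∀ m, ∃ n, m ≤ n ∧ T n) :
    ∃ k, ∀ m, ∃ n, m ≤ n ∧ T n ∧ ω n = k := by
  by_contra h
  push_neg at h
  choose F hF using h
  obtain ⟨n, hn, hTn⟩ := hT (Finset.univ.sup F)
  exact hF (ω n) n (le_trans (Finset.le_sup (Finset.mem_univ _)) hn) hTn rfl

lemma step_ineq (a b c d al be C : ℝ) (ha : 0 < a) (hd : 0 < d) (hb : 0 ≤ b) (hc : 0 ≤ c)
    (hdet : 0 < a * d - b * c) (hal : 0 < al) (hbe : 0 < be)
    (h1 : al ≤ C * be) (h2 : be ≤ C * al) :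
    (1 + (a * b + c * d) / (C * (a * d))) * ((a * d - b * c) * (al * be)) ≤
      (a * al + c * be) * (b * al + d * be) := by
  have hC : 0 < C := by nlinarith
  set δ := (a * b + c * d) / (C * (a * d)) with hδ
  have hδ0 : 0 ≤ δ := by positivity
  have k1 : δ * (C * (a * d)) = a * b + c * d := by
    rw [hδ]; field_simp
  have k1' : δ * (C * (a * d)) * (al * be) = (a * b + c * d) * (al * be) := by rw [k1]
  have h6 : 0 ≤ δ * C * (b * c) * (al * be) := by positivity
  have k2 : δ * C * ((a * d - b * c) * (al * be)) ≤ (a * b + c * d) * (al * be) := by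
    nlinarith [k1', h6]
  have m1 : al * be ≤ C * (al * al) := by nlinarith
  have m2 : al * be ≤ C * (be * be) := by nlinarith
  have m1' : a * b * (al * be) ≤ a * b * (C * (al * al)) :=
    mul_le_mul_of_nonneg_left m1 (by positivity)
  have m2' : c * d * (al * be) ≤ c * d * (C * (be * be)) :=
    mul_le_mul_of_nonneg_left m2 (by positivity)
  have m4 : 0 ≤ C * (b * c * (al * be)) := by positivity
  have key : C * ((1 + δ) * ((a * d - b * c) * (al * be))) ≤
      C * ((a * al + c * be) * (b * al + d * be)) := by nlinarith [k2, m1', m2', m4]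
  exact le_of_mul_le_mul_left key hC

section Helpers

variable {s : ℕ} (M : Fin s → Matrix (Fin 2) (Fin 2) ℝ) (ω : ℕ → Fin s)

noncomputable def alf (n : ℕ) : ℝ := Pprod M ω n 0 0 + Pprod M ω n 1 0
noncomputable def bef (n : ℕ) : ℝ := Pprod M ω n 0 1 + Pprod M ω n 1 1
noncomputable def ddf (n : ℕ) : ℝ := (Pprod M ω n).det

lemma colAllowable_Pprod (hM : ∀ k, ColAllowable (M k)) (n : ℕ) : ColAllowable (Pprod M ω n) := by
  induction n with
  | zero => rw [Pprod_zero]; exact colAllowable_one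
  | succ n ih => rw [Pprod_succ]; exact colAllowable_mul ih (hM _)

lemma alf_pos (hM : ∀ k, ColAllowable (M k)) (n : ℕ) : 0 < alf M ω n := (colAllowable_Pprod M ω hM n).2.1
lemma bef_pos (hM : ∀ k, ColAllowable (M k)) (n : ℕ) : 0 < bef M ω n := (colAllowable_Pprod M ω hM n).2.2

lemma alf_step (n : ℕ) :
    alf M ω (n + 1) = M (ω n) 0 0 * alf M ω n + M (ω n) 1 0 * bef M ω n := by
  unfold alf bef
  rw [Pprod_succ, mul_apply2, mul_apply2]
  ring

lemma bef_step (n : ℕ) :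
    bef M ω (n + 1) = M (ω n) 0 1 * alf M ω n + M (ω n) 1 1 * bef M ω n := by
  unfold alf bef
  rw [Pprod_succ, mul_apply2, mul_apply2]
  ring

lemma ddf_step (n : ℕ) : ddf M ω (n + 1) = ddf M ω n * (M (ω n)).det := by
  unfold ddf
  rw [Pprod_succ, Matrix.det_mul]

lemma ddf_bound (hM : ∀ k, ColAllowable (M k)) (n : ℕ) : |ddf M ω n| ≤ alf M ω n * bef M ω n := by
  have e : ddf M ω n = Pprod M ω n 0 0 * Pprod M ω n 1 1
      - Pprod M ω n 0 1 * Pprod M ω n 1 0 := Matrix.det_fin_two _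
  have h00 := (colAllowable_Pprod M ω hM n).1 0 0
  have h01 := (colAllowable_Pprod M ω hM n).1 0 1
  have h10 := (colAllowable_Pprod M ω hM n).1 1 0
  have h11 := (colAllowable_Pprod M ω hM n).1 1 1
  rw [abs_le]
  constructor <;> (rw [e]; unfold alf bef) <;>
    nlinarith [mul_nonneg h00 h01, mul_nonneg h00 h11, mul_nonneg h10 h11,
      mul_nonneg h01 h10]

lemma diff_eq (hM : ∀ k, ColAllowable (M k)) (V W : Fin 2 → ℝ) (hV0 : 0 < V 0) (hV1 : 0 < V 1)
    (hW0 : 0 < W 0) (hW1 : 0 < W 1) (n : ℕ) :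
    nv ((Pprod M ω n).mulVec V) - nv ((Pprod M ω n).mulVec W) =
      ddf M ω n * (V 0 * W 1 - V 1 * W 0) /
        ((alf M ω n * V 0 + bef M ω n * V 1) * (alf M ω n * W 0 + bef M ω n * W 1)) := by
  have h1 := alf_pos M ω hM n
  have h2 := bef_pos M ω hM n
  have hv : 0 < alf M ω n * V 0 + bef M ω n * V 1 := by
    nlinarith [mul_pos h1 hV0, mul_pos h2 hV1]
  have hw : 0 < alf M ω n * W 0 + bef M ω n * W 1 := by
    nlinarith [mul_pos h1 hW0, mul_pos h2 hW1]
  have := nv_sub_nv (Pprod M ω n) V W (by unfold alf bef at hv; exact hv)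
    (by unfold alf bef at hw; exact hw)
  rw [this]
  unfold ddf alf bef
  ring_nf

lemma Dv_pos (hM : ∀ k, ColAllowable (M k)) (V : Fin 2 → ℝ) (hV0 : 0 < V 0) (hV1 : 0 < V 1) (n : ℕ) :
    0 < alf M ω n * V 0 + bef M ω n * V 1 := by
  nlinarith [mul_pos (alf_pos M ω hM n) hV0, mul_pos (bef_pos M ω hM n) hV1]

end Helpers

set_option maxHeartbeats 2000000 in
theorem stmt14 (s : ℕ) (M : Fin s → Matrix (Fin 2) (Fin 2) ℝ)
    (hM : ∀ k, ColAllowable (M k))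
    (hcases :
      -- Case 1
      ((∀ k, M k 1 0 = 0 → M k 1 1 ≤ M k 0 0) ∧
       (∀ k, M k 0 1 = 0 → M k 0 0 ≤ M k 1 1) ∧
       (∀ k l, M k 1 1 = 0 → M l 0 0 = 0 →
         M l 0 1 * M k 1 0 ≤ M k 0 1 * M l 1 0) ∧
       (∀ k, ¬(M k 0 1 = 0 ∧ M k 1 0 = 0)) ∧
       (∀ k, ¬(M k 0 0 = 0 ∧ M k 1 1 = 0))) ∨
      -- Case 2
      ((∀ k, M k 1 0 = 0 → M k 0 0 < M k 1 1) ∧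
       (∀ k, M k 0 1 = 0 → M k 1 1 < M k 0 0) ∧
       (∀ k l, M k 1 1 = 0 → M l 0 0 = 0 →
         M k 0 1 * M l 1 0 < M l 0 1 * M k 1 0)) ∨
      -- Case 3
      ((∀ k, M k 1 0 = 0 → M k 1 1 ≤ M k 0 0) ∧
       (∀ k, M k 0 1 = 0 → M k 1 1 < M k 0 0) ∧
       (∀ k, M k 0 0 ≠ 0)) ∨
      -- Case 4
      ((∀ k, M k 1 0 = 0 → M k 0 0 < M k 1 1) ∧
       (∀ k, M k 0 1 = 0 → M k 0 0 ≤ M k 1 1) ∧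
       (∀ k, M k 1 1 ≠ 0))) :
    ∀ V W : Fin 2 → ℝ, 0 < V 0 → 0 < V 1 → 0 < W 0 → 0 < W 1 →
      ∀ ω : ℕ → Fin s, ∀ LV LW : Fin 2 → ℝ,
        Tendsto (fun n => Nv ((Pprod M ω n).mulVec V)) atTop (nhds LV) →
        Tendsto (fun n => Nv ((Pprod M ω n).mulVec W)) atTop (nhds LW) →
        LV = LW := by
  intro V W hV0 hV1 hW0 hW1 ω LV LW hTV hTW
  rw [tendsto_pi_nhds] at hTV hTW
  have hp : Tendsto (fun n => nv ((Pprod M ω n).mulVec V)) atTop (nhds (LV 0)) := by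
    have := hTV 0; simpa [Nv] using this
  have hq : Tendsto (fun n => nv ((Pprod M ω n).mulVec W)) atTop (nhds (LW 0)) := by
    have := hTW 0; simpa [Nv] using this
  suffices h : LV 0 = LW 0 by
    funext i
    fin_cases i
    · exact h
    · have l1 : Tendsto (fun n => Nv ((Pprod M ω n).mulVec V) 1) atTop (nhds (LV 1)) := hTV 1
      have l2 : Tendsto (fun n => Nv ((Pprod M ω n).mulVec V) 1) atTop (nhds (1 - LV 0)) := by
        have := (tendsto_const_nhds (x := (1:ℝ))).sub hp
        simpa [Nv] using this
      have l3 : Tendsto (fun n => Nv ((Pprod M ω n).mulVec W) 1) atTop (nhds (LW 1)) := hTW 1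
      have l4 : Tendsto (fun n => Nv ((Pprod M ω n).mulVec W) 1) atTop (nhds (1 - LW 0)) := by
        have := (tendsto_const_nhds (x := (1:ℝ))).sub hq
        simpa [Nv] using this
      have e1 := tendsto_nhds_unique l1 l2
      have e2 := tendsto_nhds_unique l3 l4
      show LV 1 = LW 1
      rw [e1, e2, h]
  by_contra hne
  -- notation
  have hal := alf_pos M ω hM
  have hbe := bef_pos M ω hM
  have hDv : ∀ n, 0 < alf M ω n * V 0 + bef M ω n * V 1 := Dv_pos M ω hM V hV0 hV1
  have hDw : ∀ n, 0 < alf M ω n * W 0 + bef M ω n * W 1 := Dv_pos M ω hM W hW0 hW1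
  set g := |LV 0 - LW 0| / 2 with hgdef
  have hg : 0 < g := by
    have h1 : LV 0 - LW 0 ≠ 0 := sub_ne_zero.mpr hne
    have := abs_pos.mpr h1
    rw [hgdef]; linarith
  have hdifft : Tendsto (fun n => nv ((Pprod M ω n).mulVec V) - nv ((Pprod M ω n).mulVec W))
      atTop (nhds (LV 0 - LW 0)) := hp.sub hq
  obtain ⟨N₀, hN₀⟩ := Metric.tendsto_atTop.mp hdifft g hg
  have habs : ∀ n, N₀ ≤ n →
      g ≤ |nv ((Pprod M ω n).mulVec V) - nv ((Pprod M ω n).mulVec W)| ∧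
      0 < (LV 0 - LW 0) * (nv ((Pprod M ω n).mulVec V) - nv ((Pprod M ω n).mulVec W)) := by
    intro n hn
    have h := hN₀ n hn
    rw [Real.dist_eq] at h
    have h2g : |LV 0 - LW 0| = 2 * g := by rw [hgdef]; ring
    constructor
    · have t := abs_sub_abs_le_abs_sub (LV 0 - LW 0)
        (nv ((Pprod M ω n).mulVec V) - nv ((Pprod M ω n).mulVec W))
      have t2 := abs_sub_comm (LV 0 - LW 0)
        (nv ((Pprod M ω n).mulVec V) - nv ((Pprod M ω n).mulVec W))
      linarith
    · rcases abs_sub_lt_iff.mp h with ⟨ha1, ha2⟩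
      rcases lt_or_ge 0 (LV 0 - LW 0) with hpq | hpq
      · have hx : |LV 0 - LW 0| = LV 0 - LW 0 := abs_of_pos hpq
        have hd : 0 < nv ((Pprod M ω n).mulVec V) - nv ((Pprod M ω n).mulVec W) := by
          linarith
        exact mul_pos hpq hd
      · have hpq' : LV 0 - LW 0 < 0 :=
          lt_of_le_of_ne hpq (sub_ne_zero.mpr hne)
        have hx : |LV 0 - LW 0| = -(LV 0 - LW 0) := abs_of_neg hpq'
        have hd : nv ((Pprod M ω n).mulVec V) - nv ((Pprod M ω n).mulVec W) < 0 := by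
          linarith
        exact mul_pos_of_neg_of_neg hpq' hd
  have hdeq := diff_eq M ω hM V W hV0 hV1 hW0 hW1
  have hdd_sign : ∀ n, N₀ ≤ n →
      0 < ((LV 0 - LW 0) * (V 0 * W 1 - V 1 * W 0)) * ddf M ω n := by
    intro n hn
    have h2 := (habs n hn).2
    rw [hdeq n] at h2
    have hDvDw : 0 < (alf M ω n * V 0 + bef M ω n * V 1) * (alf M ω n * W 0 + bef M ω n * W 1) :=
      mul_pos (hDv n) (hDw n)
    rw [← mul_div_assoc] at h2
    rcases div_pos_iff.mp h2 with ⟨h3, _⟩ | ⟨_, h4⟩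
    · nlinarith [h3]
    · linarith
  have hcrossne : V 0 * W 1 - V 1 * W 0 ≠ 0 := by
    intro h
    have h1 := (habs N₀ le_rfl).1
    rw [hdeq N₀, h] at h1
    simp at h1
    linarith
  have hdetA : ∀ n, N₀ ≤ n → 0 < (M (ω n)).det := by
    intro n hn
    have h1 := hdd_sign n hn
    have h2 := hdd_sign (n + 1) (by omega)
    rw [ddf_step] at h2
    by_contra hle
    push_neg at hle
    nlinarith
  have hMk : ∀ n, N₀ ≤ n → 0 < M (ω n) 0 0 ∧ 0 < M (ω n) 1 1 := by
    intro n hn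
    have h := hdetA n hn
    rw [Matrix.det_fin_two] at h
    have h1 := (hM (ω n)).1 0 1
    have h2 := (hM (ω n)).1 1 0
    have h3 := (hM (ω n)).1 0 0
    have h4 := (hM (ω n)).1 1 1
    constructor <;> nlinarith [mul_nonneg h1 h2]
  have hddpos : ∀ n, N₀ ≤ n → 0 < |ddf M ω n| := by
    intro n hn
    rcases eq_or_ne (ddf M ω n) 0 with h | h
    · exfalso
      have := hdd_sign n hn
      rw [h] at this
      simp at this
    · exact abs_pos.mpr h
  have hglow : ∀ n, N₀ ≤ n →
      g * ((alf M ω n * V 0 + bef M ω n * V 1) * (alf M ω n * W 0 + bef M ω n * W 1)) ≤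
        |ddf M ω n| * |V 0 * W 1 - V 1 * W 0| := by
    intro n hn
    have h := (habs n hn).1
    rw [hdeq n, abs_div, abs_mul, abs_of_pos (mul_pos (hDv n) (hDw n))] at h
    exact (le_div_iff₀ (mul_pos (hDv n) (hDw n))).mp h
  -- ratio comparability and det lower bound
  have hA1 : ∀ n, N₀ ≤ n →
      g * (V 0 * W 0) * alf M ω n ≤ |V 0 * W 1 - V 1 * W 0| * bef M ω n := by
    intro n hn
    have h := hglow n hn
    have hb := ddf_bound M ω hM n
    have m1 : alf M ω n * V 0 * (alf M ω n * W 0) ≤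
        (alf M ω n * V 0 + bef M ω n * V 1) * (alf M ω n * W 0 + bef M ω n * W 1) := by
      have l1 : alf M ω n * V 0 ≤ alf M ω n * V 0 + bef M ω n * V 1 := by
        nlinarith [mul_pos (hbe n) hV1]
      have l2 : alf M ω n * W 0 ≤ alf M ω n * W 0 + bef M ω n * W 1 := by
        nlinarith [mul_pos (hbe n) hW1]
      exact mul_le_mul l1 l2 (mul_nonneg (hal n).le hW0.le) (hDv n).le
    have m3 : |ddf M ω n| * |V 0 * W 1 - V 1 * W 0| ≤
        alf M ω n * bef M ω n * |V 0 * W 1 - V 1 * W 0| :=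
      mul_le_mul_of_nonneg_right hb (abs_nonneg _)
    have key : (g * (V 0 * W 0) * alf M ω n) * alf M ω n ≤
        (|V 0 * W 1 - V 1 * W 0| * bef M ω n) * alf M ω n := by
      nlinarith [m1, m3, h, hg]
    exact le_of_mul_le_mul_right key (hal n)
  have hA2 : ∀ n, N₀ ≤ n →
      g * (V 1 * W 1) * bef M ω n ≤ |V 0 * W 1 - V 1 * W 0| * alf M ω n := by
    intro n hn
    have h := hglow n hn
    have hb := ddf_bound M ω hM n
    have m1 : bef M ω n * V 1 * (bef M ω n * W 1) ≤
        (alf M ω n * V 0 + bef M ω n * V 1) * (alf M ω n * W 0 + bef M ω n * W 1) := by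
      have l1 : bef M ω n * V 1 ≤ alf M ω n * V 0 + bef M ω n * V 1 := by
        nlinarith [mul_pos (hal n) hV0]
      have l2 : bef M ω n * W 1 ≤ alf M ω n * W 0 + bef M ω n * W 1 := by
        nlinarith [mul_pos (hal n) hW0]
      exact mul_le_mul l1 l2 (mul_nonneg (hbe n).le hW1.le) (hDv n).le
    have m3 : |ddf M ω n| * |V 0 * W 1 - V 1 * W 0| ≤
        alf M ω n * bef M ω n * |V 0 * W 1 - V 1 * W 0| :=
      mul_le_mul_of_nonneg_right hb (abs_nonneg _)
    have key : (g * (V 1 * W 1) * bef M ω n) * bef M ω n ≤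
        (|V 0 * W 1 - V 1 * W 0| * alf M ω n) * bef M ω n := by
      nlinarith [m1, m3, h, hg]
    exact le_of_mul_le_mul_right key (hbe n)
  have hFlow : ∀ n, N₀ ≤ n →
      g * (V 0 * W 1) * (alf M ω n * bef M ω n) ≤ |ddf M ω n| * |V 0 * W 1 - V 1 * W 0| := by
    intro n hn
    have h := hglow n hn
    have m1 : alf M ω n * V 0 * (bef M ω n * W 1) ≤
        (alf M ω n * V 0 + bef M ω n * V 1) * (alf M ω n * W 0 + bef M ω n * W 1) := by
      have l1 : alf M ω n * V 0 ≤ alf M ω n * V 0 + bef M ω n * V 1 := by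
        nlinarith [mul_pos (hbe n) hV1]
      have l2 : bef M ω n * W 1 ≤ alf M ω n * W 0 + bef M ω n * W 1 := by
        nlinarith [mul_pos (hal n) hW0]
      exact mul_le_mul l1 l2 (mul_nonneg (hbe n).le hW1.le) (hDv n).le
    nlinarith [m1, h, hg]
  set C := max (|V 0 * W 1 - V 1 * W 0| / (g * (V 0 * W 0)))
      (|V 0 * W 1 - V 1 * W 0| / (g * (V 1 * W 1))) with hCdef
  have hCpos : 0 < C := by
    have h1 : 0 < |V 0 * W 1 - V 1 * W 0| / (g * (V 0 * W 0)) :=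
      div_pos (abs_pos.mpr hcrossne) (by positivity)
    calc (0:ℝ) < _ := h1
    _ ≤ C := le_max_left _ _
  have hCal : ∀ n, N₀ ≤ n → alf M ω n ≤ C * bef M ω n := by
    intro n hn
    have h := hA1 n hn
    have h1 : alf M ω n ≤ |V 0 * W 1 - V 1 * W 0| / (g * (V 0 * W 0)) * bef M ω n := by
      rw [div_mul_eq_mul_div, le_div_iff₀ (by positivity)]
      nlinarith [h]
    have h2 : |V 0 * W 1 - V 1 * W 0| / (g * (V 0 * W 0)) * bef M ω n ≤ C * bef M ω n :=
      mul_le_mul_of_nonneg_right (le_max_left _ _) (hbe n).le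
    linarith
  have hCbe : ∀ n, N₀ ≤ n → bef M ω n ≤ C * alf M ω n := by
    intro n hn
    have h := hA2 n hn
    have h1 : bef M ω n ≤ |V 0 * W 1 - V 1 * W 0| / (g * (V 1 * W 1)) * alf M ω n := by
      rw [div_mul_eq_mul_div, le_div_iff₀ (by positivity)]
      nlinarith [h]
    have h2 : |V 0 * W 1 - V 1 * W 0| / (g * (V 1 * W 1)) * alf M ω n ≤ C * alf M ω n :=
      mul_le_mul_of_nonneg_right (le_max_right _ _) (hal n).le
    linarith
  have hddabs_step : ∀ n, N₀ ≤ n → |ddf M ω (n + 1)| = |ddf M ω n| * (M (ω n)).det := by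
    intro n hn
    rw [ddf_step, abs_mul, abs_of_pos (hdetA n hn)]
  by_cases hinfnd : ∀ m, ∃ n, m ≤ n ∧ ¬(M (ω n) 0 1 = 0 ∧ M (ω n) 1 0 = 0)
  · -- Scenario A : non-diagonal matrices appear infinitely often
    obtain ⟨k, hk⟩ := pigeonhole ω _ hinfnd
    obtain ⟨n₀, hn₀N, hTn₀, hωn₀⟩ := hk N₀
    have hak : 0 < M k 0 0 := by have := (hMk n₀ hn₀N).1; rwa [hωn₀] at this
    have hdk : 0 < M k 1 1 := by have := (hMk n₀ hn₀N).2; rwa [hωn₀] at this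
    have hdetk : 0 < M k 0 0 * M k 1 1 - M k 0 1 * M k 1 0 := by
      have := hdetA n₀ hn₀N
      rw [hωn₀, Matrix.det_fin_two] at this
      exact this
    have hbk := (hM k).1 0 1
    have hck := (hM k).1 1 0
    have hnd : ¬(M k 0 1 = 0 ∧ M k 1 0 = 0) := by rwa [hωn₀] at hTn₀
    have hnum : 0 < M k 0 0 * M k 0 1 + M k 1 0 * M k 1 1 := by
      rcases not_and_or.mp hnd with h | h
      · have hb' : 0 < M k 0 1 := lt_of_le_of_ne hbk (Ne.symm h)
        exact add_pos_of_pos_of_nonneg (mul_pos hak hb') (mul_nonneg hck hdk.le)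
      · have hc' : 0 < M k 1 0 := lt_of_le_of_ne hck (Ne.symm h)
        exact add_pos_of_nonneg_of_pos (mul_nonneg hak.le hbk) (mul_pos hc' hdk)
    have hθ1 : 1 < 1 + (M k 0 0 * M k 0 1 + M k 1 0 * M k 1 1) / (C * (M k 0 0 * M k 1 1)) := by
      have : 0 < (M k 0 0 * M k 0 1 + M k 1 0 * M k 1 1) / (C * (M k 0 0 * M k 1 1)) := by
        apply div_pos hnum
        positivity
      linarith
    have hθ0 : (0:ℝ) < 1 + (M k 0 0 * M k 0 1 + M k 1 0 * M k 1 1) / (C * (M k 0 0 * M k 1 1)) :=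
      lt_trans one_pos hθ1
    have hfpos : ∀ n, N₀ ≤ n → 0 < alf M ω n * bef M ω n / |ddf M ω n| :=
      fun n hn => div_pos (mul_pos (hal n) (hbe n)) (hddpos n hn)
    have hmono : ∀ n, N₀ ≤ n →
        alf M ω n * bef M ω n / |ddf M ω n| ≤
          alf M ω (n + 1) * bef M ω (n + 1) / |ddf M ω (n + 1)| := by
      intro n hn
      have hdA := hdetA n hn
      have ha0 := (hM (ω n)).1 0 0
      have hb0 := (hM (ω n)).1 0 1
      have hc0 := (hM (ω n)).1 1 0
      have hd0 := (hM (ω n)).1 1 1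
      have SI : (M (ω n)).det * (alf M ω n * bef M ω n) ≤
          alf M ω (n + 1) * bef M ω (n + 1) := by
        rw [alf_step, bef_step, Matrix.det_fin_two]
        nlinarith [mul_nonneg (mul_nonneg ha0 hb0) (mul_pos (hal n) (hal n)).le,
          mul_nonneg (mul_nonneg hb0 hc0) (mul_pos (hal n) (hbe n)).le,
          mul_nonneg (mul_nonneg hc0 hd0) (mul_pos (hbe n) (hbe n)).le]
      rw [div_le_div_iff₀ (hddpos n hn) (hddpos (n + 1) (by omega)), hddabs_step n hn]
      nlinarith [mul_le_mul_of_nonneg_right SI (abs_nonneg (ddf M ω n))]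
    have hstep : ∀ n, N₀ ≤ n → ω n = k →
        (1 + (M k 0 0 * M k 0 1 + M k 1 0 * M k 1 1) / (C * (M k 0 0 * M k 1 1))) *
            (alf M ω n * bef M ω n / |ddf M ω n|) ≤
          alf M ω (n + 1) * bef M ω (n + 1) / |ddf M ω (n + 1)| := by
      intro n hn hω
      have SI := step_ineq (M k 0 0) (M k 0 1) (M k 1 0) (M k 1 1)
        (alf M ω n) (bef M ω n) C hak hdk hbk hck hdetk (hal n) (hbe n)
        (hCal n hn) (hCbe n hn)
      have e1 : alf M ω (n + 1) = M k 0 0 * alf M ω n + M k 1 0 * bef M ω n := by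
        rw [alf_step, hω]
      have e2 : bef M ω (n + 1) = M k 0 1 * alf M ω n + M k 1 1 * bef M ω n := by
        rw [bef_step, hω]
      rw [← mul_div_assoc, div_le_div_iff₀ (hddpos n hn) (hddpos (n + 1) (by omega)),
        hddabs_step n hn, hω, Matrix.det_fin_two, e1, e2]
      nlinarith [mul_le_mul_of_nonneg_right SI (abs_nonneg (ddf M ω n))]
    have key := escape hθ0 (fun n => ω n = k) hmono hstep
      (fun m => by obtain ⟨n, h1, _, h3⟩ := hk m; exact ⟨n, h1, h3⟩) hfpos
    have hub : ∀ n, N₀ ≤ n → alf M ω n * bef M ω n / |ddf M ω n| ≤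
        |V 0 * W 1 - V 1 * W 0| / (g * (V 0 * W 1)) := by
      intro n hn
      rw [div_le_div_iff₀ (hddpos n hn) (by positivity)]
      nlinarith [hFlow n hn]
    obtain ⟨j, hj⟩ := pow_unbounded_of_one_lt
      (|V 0 * W 1 - V 1 * W 0| / (g * (V 0 * W 1)) /
        (alf M ω N₀ * bef M ω N₀ / |ddf M ω N₀|)) hθ1
    obtain ⟨n, hn, hnf⟩ := key j
    have h1 := hub n hn
    have hfN : 0 < alf M ω N₀ * bef M ω N₀ / |ddf M ω N₀| := hfpos N₀ le_rfl
    rw [div_lt_iff₀ hfN] at hj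
    linarith
  · -- Scenario B : eventually all matrices are diagonal
    push_neg at hinfnd
    obtain ⟨m, hm⟩ := hinfnd
    have hdiag : ∀ n, max m N₀ ≤ n → M (ω n) 0 1 = 0 ∧ M (ω n) 1 0 = 0 := by
      intro n hn
      exact hm n (le_trans (le_max_left _ _) hn)
    have hN₁N₀ : N₀ ≤ max m N₀ := le_max_right _ _
    rcases hcases with ⟨_, _, _, h4, _⟩ | ⟨h1, h2, _⟩ | ⟨_, h2, _⟩ | ⟨h1, _, _⟩
    · exact h4 (ω (max m N₀)) (hdiag (max m N₀) le_rfl)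
    · have hd := hdiag (max m N₀) le_rfl
      have a1 := h1 (ω (max m N₀)) hd.2
      have a2 := h2 (ω (max m N₀)) hd.1
      linarith
    · -- Case 3
      obtain ⟨k, hk⟩ := pigeonhole ω (fun n => max m N₀ ≤ n)
        (fun m' => ⟨max m' (max m N₀), le_max_left _ _, le_max_right _ _⟩)
      obtain ⟨n₁, _, hn₁N, hωn₁⟩ := hk (max m N₀)
      have hak : 0 < M k 0 0 := by
        have := (hMk n₁ (le_trans hN₁N₀ hn₁N)).1; rwa [hωn₁] at this
      have hdk : 0 < M k 1 1 := by
        have := (hMk n₁ (le_trans hN₁N₀ hn₁N)).2; rwa [hωn₁] at this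
      have hdiagk : M k 0 1 = 0 ∧ M k 1 0 = 0 := by
        have := hdiag n₁ hn₁N; rwa [hωn₁] at this
      have hlt : M k 1 1 < M k 0 0 := h2 k hdiagk.1
      have hθ1 : 1 < M k 0 0 / M k 1 1 := (one_lt_div hdk).mpr hlt
      have hfpos : ∀ n, max m N₀ ≤ n → 0 < alf M ω n / bef M ω n :=
        fun n _ => div_pos (hal n) (hbe n)
      have hmono : ∀ n, max m N₀ ≤ n →
          alf M ω n / bef M ω n ≤ alf M ω (n + 1) / bef M ω (n + 1) := by
        intro n hn
        obtain ⟨hb0, hc0⟩ := hdiag n hn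
        have hlt' : M (ω n) 1 1 ≤ M (ω n) 0 0 := le_of_lt (h2 (ω n) hb0)
        have ha0 := (hMk n (le_trans hN₁N₀ hn)).1
        have hd0 := (hMk n (le_trans hN₁N₀ hn)).2
        have e1 : alf M ω (n + 1) = M (ω n) 0 0 * alf M ω n := by
          rw [alf_step, hc0]; ring
        have e2 : bef M ω (n + 1) = M (ω n) 1 1 * bef M ω n := by
          rw [bef_step, hb0]; ring
        rw [e1, e2, div_le_div_iff₀ (hbe n) (mul_pos hd0 (hbe n))]
        nlinarith [mul_pos (hal n) (hbe n)]
      have hstep : ∀ n, max m N₀ ≤ n → ω n = k →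
          M k 0 0 / M k 1 1 * (alf M ω n / bef M ω n) ≤
            alf M ω (n + 1) / bef M ω (n + 1) := by
        intro n hn hω
        obtain ⟨hb0, hc0⟩ := hdiag n hn
        rw [hω] at hb0 hc0
        have e1 : alf M ω (n + 1) = M k 0 0 * alf M ω n := by
          rw [alf_step, hω, hc0]; ring
        have e2 : bef M ω (n + 1) = M k 1 1 * bef M ω n := by
          rw [bef_step, hω, hb0]; ring
        rw [e1, e2, div_mul_div_comm]
      have key := escape (lt_trans one_pos hθ1) (fun n => ω n = k) hmono hstep
        (fun m' => by obtain ⟨n, h1', _, h3'⟩ := hk m'; exact ⟨n, h1', h3'⟩) hfpos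
      obtain ⟨j, hj⟩ := pow_unbounded_of_one_lt (C / (alf M ω (max m N₀) / bef M ω (max m N₀))) hθ1
      obtain ⟨n, hn, hnf⟩ := key j
      have h1' : alf M ω n / bef M ω n ≤ C := by
        rw [div_le_iff₀ (hbe n)]
        exact hCal n (le_trans hN₁N₀ hn)
      have hfN : 0 < alf M ω (max m N₀) / bef M ω (max m N₀) := hfpos _ le_rfl
      rw [div_lt_iff₀ hfN] at hj
      linarith
    · -- Case 4
      obtain ⟨k, hk⟩ := pigeonhole ω (fun n => max m N₀ ≤ n)
        (fun m' => ⟨max m' (max m N₀), le_max_left _ _, le_max_right _ _⟩)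
      obtain ⟨n₁, _, hn₁N, hωn₁⟩ := hk (max m N₀)
      have hak : 0 < M k 0 0 := by
        have := (hMk n₁ (le_trans hN₁N₀ hn₁N)).1; rwa [hωn₁] at this
      have hdk : 0 < M k 1 1 := by
        have := (hMk n₁ (le_trans hN₁N₀ hn₁N)).2; rwa [hωn₁] at this
      have hdiagk : M k 0 1 = 0 ∧ M k 1 0 = 0 := by
        have := hdiag n₁ hn₁N; rwa [hωn₁] at this
      have hlt : M k 0 0 < M k 1 1 := h1 k hdiagk.2
      have hθ1 : 1 < M k 1 1 / M k 0 0 := (one_lt_div hak).mpr hlt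
      have hfpos : ∀ n, max m N₀ ≤ n → 0 < bef M ω n / alf M ω n :=
        fun n _ => div_pos (hbe n) (hal n)
      have hmono : ∀ n, max m N₀ ≤ n →
          bef M ω n / alf M ω n ≤ bef M ω (n + 1) / alf M ω (n + 1) := by
        intro n hn
        obtain ⟨hb0, hc0⟩ := hdiag n hn
        have hlt' : M (ω n) 0 0 ≤ M (ω n) 1 1 := le_of_lt (h1 (ω n) hc0)
        have ha0 := (hMk n (le_trans hN₁N₀ hn)).1
        have hd0 := (hMk n (le_trans hN₁N₀ hn)).2
        have e1 : alf M ω (n + 1) = M (ω n) 0 0 * alf M ω n := by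
          rw [alf_step, hc0]; ring
        have e2 : bef M ω (n + 1) = M (ω n) 1 1 * bef M ω n := by
          rw [bef_step, hb0]; ring
        rw [e1, e2, div_le_div_iff₀ (hal n) (mul_pos ha0 (hal n))]
        nlinarith [mul_pos (hal n) (hbe n)]
      have hstep : ∀ n, max m N₀ ≤ n → ω n = k →
          M k 1 1 / M k 0 0 * (bef M ω n / alf M ω n) ≤
            bef M ω (n + 1) / alf M ω (n + 1) := by
        intro n hn hω
        obtain ⟨hb0, hc0⟩ := hdiag n hn
        rw [hω] at hb0 hc0
        have e1 : alf M ω (n + 1) = M k 0 0 * alf M ω n := by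
          rw [alf_step, hω, hc0]; ring
        have e2 : bef M ω (n + 1) = M k 1 1 * bef M ω n := by
          rw [bef_step, hω, hb0]; ring
        rw [e1, e2, div_mul_div_comm]
      have key := escape (lt_trans one_pos hθ1) (fun n => ω n = k) hmono hstep
        (fun m' => by obtain ⟨n, h1', _, h3'⟩ := hk m'; exact ⟨n, h1', h3'⟩) hfpos
      obtain ⟨j, hj⟩ := pow_unbounded_of_one_lt (C / (bef M ω (max m N₀) / alf M ω (max m N₀))) hθ1
      obtain ⟨n, hn, hnf⟩ := key j
      have h1' : bef M ω n / alf M ω n ≤ C := by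
        rw [div_le_iff₀ (hal n)]
        exact hCbe n (le_trans hN₁N₀ hn)
      have hfN : 0 < bef M ω (max m N₀) / alf M ω (max m N₀) := hfpos _ le_rfl
      rw [div_lt_iff₀ hfN] at hj
      linarith
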